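/- Fix a residue pair (k_r, k_c) ∈ {0,1,2}². For a set S of type-⌞ L-shapes with all arm lengths in [s, 2s), whose corners lie in grid boxes (r', c') with r' ≡ k_r (mod 3) and c' ≡ k_c (mod 3), the intersection graph of S is the disjoint union, over boxes (r, c) with r ≡ k_r, c ≡ k_c (mod 3), of the intersection graphs of the L-shapes with corner in box (r, c); i.e., there are no edges between L-shapes whose corners lie in distinct such boxes. -/
import Mathlib


/-- An L-shape of type ⌞ given by its corner `(xc, yc)`, horizontal tip x-coordinate `xh`
and vertical tip y-coordinate `yv`. -/
structure LShape where
  xc : ℝ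
  yc : ℝ
  xh : ℝ
  yv : ℝ
  hx : xc ≤ xh
  hy : yc ≤ yv

/-- The point set of a type-⌞ L-shape. -/
def LShape.pts (l : LShape) : Set (ℝ × ℝ) :=
  {p | (p.2 = l.yc ∧ l.xc ≤ p.1 ∧ p.1 ≤ l.xh) ∨ (p.1 = l.xc ∧ l.yc ≤ p.2 ∧ p.2 ≤ l.yv)}

/-- The corner of `l` lies inside the half-open grid box `(r, c)` of side length `s`. -/
def InBox (s : ℝ) (r c : ℤ) (l : LShape) : Prop :=
  (c : ℝ) * s ≤ l.xc ∧ l.xc < ((c : ℝ) + 1) * s ∧ (r : ℝ) * s ≤ l.yc ∧ l.yc < ((r : ℝ) + 1) * s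

lemma pts_bound (s : ℝ) (hs : 0 < s) (r c : ℤ) (l : LShape)
    (h : InBox s r c l) (ha : l.xh - l.xc < 2 * s) (hb : l.yv - l.yc < 2 * s)
    (p : ℝ × ℝ) (hp : p ∈ l.pts) :
    (c : ℝ) * s ≤ p.1 ∧ p.1 < ((c : ℝ) + 3) * s ∧ (r : ℝ) * s ≤ p.2 ∧ p.2 < ((r : ℝ) + 3) * s := by
  obtain ⟨hc1, hc2, hr1, hr2⟩ := h
  rcases hp with ⟨h1, h2, h3⟩ | ⟨h1, h2, h3⟩ <;>
  · constructor
    · nlinarith [l.hx, l.hy]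
    constructor
    · nlinarith [l.hx, l.hy]
    constructor
    · nlinarith [l.hx, l.hy]
    · nlinarith [l.hx, l.hy]

/-- Fix residues `kr, kc ∈ {0, 1, 2}`.  If two type-⌞ L-shapes have all arm lengths in
`[s, 2s)` and corners in distinct grid boxes `(r₁, c₁) ≠ (r₂, c₂)` with
`r₁ ≡ r₂ ≡ kr (mod 3)` and `c₁ ≡ c₂ ≡ kc (mod 3)`, then they are disjoint: the intersection
graph of such a family is the disjoint union of the intersection graphs over the individual
boxes, there being no edges between L-shapes with corners in distinct boxes. -/
theorem stmt8 (s : ℝ) (hs : 0 < s) (kr kc : ℤ)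
    (hkr : kr = 0 ∨ kr = 1 ∨ kr = 2) (hkc : kc = 0 ∨ kc = 1 ∨ kc = 2)
    (l₁ l₂ : LShape) (r₁ c₁ r₂ c₂ : ℤ)
    (h1 : InBox s r₁ c₁ l₁) (h2 : InBox s r₂ c₂ l₂)
    (hr₁ : r₁ % 3 = kr) (hc₁ : c₁ % 3 = kc) (hr₂ : r₂ % 3 = kr) (hc₂ : c₂ % 3 = kc)
    (hne : (r₁, c₁) ≠ (r₂, c₂))
    (ha₁ : s ≤ l₁.xh - l₁.xc ∧ l₁.xh - l₁.xc < 2 * s)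
    (hb₁ : s ≤ l₁.yv - l₁.yc ∧ l₁.yv - l₁.yc < 2 * s)
    (ha₂ : s ≤ l₂.xh - l₂.xc ∧ l₂.xh - l₂.xc < 2 * s)
    (hb₂ : s ≤ l₂.yv - l₂.yc ∧ l₂.yv - l₂.yc < 2 * s) :
    l₁.pts ∩ l₂.pts = ∅ := by
  have b1 := pts_bound s hs r₁ c₁ l₁ h1 ha₁.2 hb₁.2
  have b2 := pts_bound s hs r₂ c₂ l₂ h2 ha₂.2 hb₂.2
  ext p
  simp only [Set.mem_inter_iff, Set.mem_empty_iff_false, iff_false, not_and]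
  intro hp1 hp2
  obtain ⟨x1, x2, y1, y2⟩ := b1 p hp1
  obtain ⟨x1', x2', y1', y2'⟩ := b2 p hp2
  have hrc : r₁ ≠ r₂ ∨ c₁ ≠ c₂ := by
    by_contra h; push_neg at h; exact hne (by simp [h.1, h.2])
  rcases hrc with h | h
  · have : r₁ + 3 ≤ r₂ ∨ r₂ + 3 ≤ r₁ := by omega
    rcases this with h' | h'
    · have : ((r₁ : ℝ) + 3) * s ≤ (r₂ : ℝ) * s := by
        apply mul_le_mul_of_nonneg_right _ hs.le; push_cast; exact_mod_cast (by exact_mod_cast h' : (r₁ : ℝ) + 3 ≤ r₂)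
      linarith
    · have : ((r₂ : ℝ) + 3) * s ≤ (r₁ : ℝ) * s := by
        apply mul_le_mul_of_nonneg_right _ hs.le; exact_mod_cast (by exact_mod_cast h' : (r₂ : ℝ) + 3 ≤ r₁)
      linarith
  · have : c₁ + 3 ≤ c₂ ∨ c₂ + 3 ≤ c₁ := by omega
    rcases this with h' | h'
    · have : ((c₁ : ℝ) + 3) * s ≤ (c₂ : ℝ) * s := by
        apply mul_le_mul_of_nonneg_right _ hs.le; exact_mod_cast (by exact_mod_cast h' : (c₁ : ℝ) + 3 ≤ c₂)
      linarith
    · have : ((c₂ : ℝ) + 3) * s ≤ (c₁ : ℝ) * s := by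
        apply mul_le_mul_of_nonneg_right _ hs.le; exact_mod_cast (by exact_mod_cast h' : (c₂ : ℝ) + 3 ≤ c₁)
      linarith
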